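/- If B1 is the largest block (in descending total order), can be packed into a regular aligned container C* with w1 = w* (block width equals container width), and some solution packs B1 inside C* at position (x1*, y1*), then there is a solution packing B1 at position Loc(C*) (the lower-left corner of C*). The proof shows any block overlapping the horizontal strip of height h1 at the bottom of C* must be entirely inside it, so strips of equal size can be swapped. -/

import Mathlib

/-- The half-open rectangular region `[x, x+w) × [y, y+h) ⊆ ℤ²`. -/
def Reg (x y w h : ℤ) : Set (ℤ × ℤ) :=
  Set.Ico x (x + w) ×ˢ Set.Ico y (y + h)

/-- Region of a container given as a tuple `(x, y, w, h)`. -/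
def RegT (c : ℤ × ℤ × ℤ × ℤ) : Set (ℤ × ℤ) :=
  Reg c.1 c.2.1 c.2.2.1 c.2.2.2

/-- A solution to the constrained packing problem. -/
def IsSolution (m : ℕ) (wB hB : Fin m → ℤ) (𝒞 : Set (ℤ × ℤ × ℤ × ℤ))
    (x y : Fin m → ℤ) : Prop :=
  (∀ i, wB i ∣ x i ∧ hB i ∣ y i) ∧
  (∀ i j, i ≠ j →
    Reg (x i) (y i) (wB i) (hB i) ∩ Reg (x j) (y j) (wB j) (hB j) = ∅) ∧
  (∀ i, ∃ c ∈ 𝒞, Reg (x i) (y i) (wB i) (hB i) ⊆ RegT c)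

/-- The strict total order on sizes: compare `max(w,h)`, then `w`, then `h`. -/
def sizeLT (s t : ℤ × ℤ) : Prop :=
  max s.1 s.2 < max t.1 t.2 ∨
  (max s.1 s.2 = max t.1 t.2 ∧ s.1 < t.1) ∨
  (max s.1 s.2 = max t.1 t.2 ∧ s.1 = t.1 ∧ s.2 < t.2)

/-- The corresponding total (non-strict) order on sizes. -/
def sizeLE (s t : ℤ × ℤ) : Prop := s = t ∨ sizeLT s t

lemma dvdLeCases {n a : ℤ} (hn : 0 < n) (h : n ∣ a) : a ≤ 0 ∨ n ≤ a := by
  rcases le_or_gt a 0 with h' | h'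
  · exact Or.inl h'
  · exact Or.inr (Int.le_of_dvd h' h)

lemma memReg (x y w h : ℤ) (p : ℤ × ℤ) :
    p ∈ Reg x y w h ↔ x ≤ p.1 ∧ p.1 < x + w ∧ y ≤ p.2 ∧ p.2 < y + h := by
  simp [Reg, Set.mem_Ico, and_assoc]

lemma memRegT (a b c d : ℤ) (p : ℤ × ℤ) :
    p ∈ RegT (a, b, c, d) ↔ a ≤ p.1 ∧ p.1 < a + c ∧ b ≤ p.2 ∧ p.2 < b + d := by
  simp [RegT, Reg, Set.mem_Ico, and_assoc]

lemma regTranslate (x y w h δ : ℤ) :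
    (fun p : ℤ × ℤ => (p.1, p.2 + δ)) '' Reg x y w h = Reg x (y + δ) w h := by
  ext ⟨p1, p2⟩
  simp only [Set.mem_image, memReg, Prod.exists, Prod.mk.injEq]
  constructor
  · rintro ⟨a, b, ⟨h1, h2, h3, h4⟩, rfl, rfl⟩; omega
  · rintro ⟨h1, h2, h3, h4⟩; exact ⟨p1, p2 - δ, by omega, rfl, by omega⟩

lemma powDvdOfLe {q : ℕ} (hq : 1 < q) {e f : ℕ} (h : (q : ℤ) ^ e ≤ (q : ℤ) ^ f) :
    (q : ℤ) ^ e ∣ (q : ℤ) ^ f := by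
  apply pow_dvd_pow
  have hq' : (1 : ℤ) < q := by exact_mod_cast hq
  exact (pow_le_pow_iff_right₀ hq').mp h

theorem stmt13 (q1 q2 : ℕ) (hq1 : 1 < q1) (hq2 : 1 < q2)
    (m : ℕ) (wB hB : Fin (m + 1) → ℤ)
    (hBreg : ∀ i, ∃ a b : ℕ, wB i = (q1 : ℤ) ^ a ∧ hB i = (q2 : ℤ) ^ b)
    (hlargest : ∀ i, sizeLE (wB i, hB i) (wB 0, hB 0))
    (𝒞 : Set (ℤ × ℤ × ℤ × ℤ))
    (h𝒞reg : ∀ c ∈ 𝒞, ∃ a b : ℕ,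
        c.2.2.1 = (q1 : ℤ) ^ a ∧ c.2.2.2 = (q2 : ℤ) ^ b ∧
        c.2.2.1 ∣ c.1 ∧ c.2.2.2 ∣ c.2.1)
    (h𝒞disj : ∀ c ∈ 𝒞, ∀ c' ∈ 𝒞, c ≠ c' → RegT c ∩ RegT c' = ∅)
    (xs ys ws hs : ℤ) (hCstar : (xs, ys, ws, hs) ∈ 𝒞)
    (hww : wB 0 = ws)
    (x1s y1s : ℤ) (x y : Fin (m + 1) → ℤ)
    (hsol : IsSolution (m + 1) wB hB 𝒞 x y)
    (hpos : x 0 = x1s ∧ y 0 = y1s)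
    (hin : Reg x1s y1s (wB 0) (hB 0) ⊆ RegT (xs, ys, ws, hs)) :
    ∃ x' y' : Fin (m + 1) → ℤ,
      IsSolution (m + 1) wB hB 𝒞 x' y' ∧ x' 0 = xs ∧ y' 0 = ys := by
  classical
  have hq1z : (0 : ℤ) < q1 := by exact_mod_cast Nat.zero_lt_of_lt hq1
  have hq2z : (0 : ℤ) < q2 := by exact_mod_cast Nat.zero_lt_of_lt hq2
  -- container regularity facts
  obtain ⟨as, bs, hws0, hhs0, hwdvd0, hhdvd0⟩ := h𝒞reg (xs, ys, ws, hs) hCstar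
  have hhs' : hs = (q2 : ℤ) ^ bs := hhs0
  have hhdvd : hs ∣ ys := hhdvd0
  have main : ∀ n : ℕ, ∀ x y : Fin (m + 1) → ℤ,
      IsSolution (m + 1) wB hB 𝒞 x y →
      Reg (x 0) (y 0) (wB 0) (hB 0) ⊆ RegT (xs, ys, ws, hs) →
      (y 0 - ys).toNat = n →
      ∃ x' y' : Fin (m + 1) → ℤ,
        IsSolution (m + 1) wB hB 𝒞 x' y' ∧ x' 0 = xs ∧ y' 0 = ys := by
    intro n
    induction n using Nat.strong_induction_on with
    | _ n IH =>
    intro x y hsol hin hmeas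
    obtain ⟨a0, b0, hw0, hh0⟩ := hBreg 0
    have w0pos : 0 < wB 0 := hw0 ▸ pow_pos hq1z a0
    have h0pos : 0 < hB 0 := hh0 ▸ pow_pos hq2z b0
    have m1 : (x 0, y 0) ∈ Reg (x 0) (y 0) (wB 0) (hB 0) := (memReg _ _ _ _ _).mpr (by simp; omega)
    have m2 : (x 0 + wB 0 - 1, y 0 + hB 0 - 1) ∈ Reg (x 0) (y 0) (wB 0) (hB 0) :=
      (memReg _ _ _ _ _).mpr (by simp; omega)
    have c1 := (memRegT _ _ _ _ _).mp (hin m1)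
    have c2 := (memRegT _ _ _ _ _).mp (hin m2)
    simp only at c1 c2
    have hx0 : x 0 = xs := by omega
    by_cases hdone : y 0 = ys
    · exact ⟨x, y, hsol, hx0, hdone⟩
    have hd : 0 < y 0 - ys := by omega
    have hh0hs : hB 0 ∣ hs := by
      rw [hh0, hhs']; exact powDvdOfLe hq2 (by rw [← hh0, ← hhs']; omega)
    have hh0ys : hB 0 ∣ ys := hh0hs.trans hhdvd
    have hh0d : hB 0 ∣ (y 0 - ys) := dvd_sub (hsol.1 0).2 hh0ys
    -- find the exact power of q2 in y 0 - ys
    have hex : ∃ k : ℕ, ¬ (q2 : ℤ) ^ k ∣ (y 0 - ys) := by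
      refine ⟨(y 0 - ys).toNat, fun hdvd => ?_⟩
      have h1 : (q2 : ℤ) ^ (y 0 - ys).toNat ≤ y 0 - ys := Int.le_of_dvd hd hdvd
      have h2 : ((y 0 - ys).toNat : ℤ) < 2 ^ (y 0 - ys).toNat := by
        exact_mod_cast Nat.lt_two_pow_self
      have h3 : (2 : ℤ) ^ (y 0 - ys).toNat ≤ (q2 : ℤ) ^ (y 0 - ys).toNat :=
        pow_le_pow_left₀ (by norm_num) (by exact_mod_cast hq2) _
      have h4 : ((y 0 - ys).toNat : ℤ) = y 0 - ys := Int.toNat_of_nonneg (by omega)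
      linarith
    have hVspec : ¬ (q2 : ℤ) ^ (Nat.find hex) ∣ (y 0 - ys) := Nat.find_spec hex
    have hb0V : b0 < Nat.find hex := by
      by_contra hcon
      push_neg at hcon
      exact hVspec ((pow_dvd_pow _ hcon).trans (hh0 ▸ hh0d))
    set v : ℕ := Nat.find hex - 1 with hvdef
    have hHd : (q2 : ℤ) ^ v ∣ (y 0 - ys) := by
      have := Nat.find_min hex (m := v) (by omega)
      simpa using this
    have hHsucc : ¬ (q2 : ℤ) ^ (v + 1) ∣ (y 0 - ys) := by
      have : v + 1 = Nat.find hex := by omega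
      rw [this]; exact hVspec
    set H : ℤ := (q2 : ℤ) ^ v with hHdef
    have hHpos : 0 < H := pow_pos hq2z v
    have hh0H : hB 0 ∣ H := hh0 ▸ pow_dvd_pow _ (by omega : b0 ≤ v)
    have hh0leH : hB 0 ≤ H := Int.le_of_dvd hHpos hh0H
    have hHled : H ≤ y 0 - ys := Int.le_of_dvd hd hHd
    have hHhs : H ∣ hs := by
      rw [hHdef, hhs']; exact powDvdOfLe hq2 (by rw [← hhs']; omega)
    have hHys : H ∣ ys := hHhs.trans hhdvd
    have hHy0 : H ∣ y 0 := by
      have := dvd_add hHys hHd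
      rwa [show ys + (y 0 - ys) = y 0 by ring] at this
    have hstripTop : y 0 + H ≤ ys + hs := by
      have h5 : H ∣ hs - (y 0 - ys) := dvd_sub hHhs hHd
      rcases dvdLeCases hHpos h5 with h | h <;> omega
    have hstripBot : ys ≤ y 0 - H := by omega
    set Strip : Set (ℤ × ℤ) :=
      Set.Ico xs (xs + ws) ×ˢ Set.Ico (y 0 - H) (y 0 + H) with hStripDef
    have memS : ∀ p : ℤ × ℤ,
        p ∈ Strip ↔ xs ≤ p.1 ∧ p.1 < xs + ws ∧ y 0 - H ≤ p.2 ∧ p.2 < y 0 + H := by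
      intro p; rw [hStripDef]; simp [Set.mem_Ico, and_assoc]
    -- KEY: any block meeting the double strip lies in its lower or upper half
    have key : ∀ i, (Reg (x i) (y i) (wB i) (hB i) ∩ Strip).Nonempty →
        xs ≤ x i ∧ x i + wB i ≤ xs + ws ∧ hB i ∣ H ∧
          ((y 0 - H ≤ y i ∧ y i + hB i ≤ y 0) ∨ (y 0 ≤ y i ∧ y i + hB i ≤ y 0 + H)) := by
      rintro i ⟨p, hpB, hpS⟩
      by_cases hi0 : i = 0
      · subst hi0
        exact ⟨by omega, by omega, hh0H, Or.inr ⟨le_refl _, by omega⟩⟩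
      obtain ⟨ai, bi, hwi, hhi⟩ := hBreg i
      have wipos : 0 < wB i := hwi ▸ pow_pos hq1z ai
      have hipos : 0 < hB i := hhi ▸ pow_pos hq2z bi
      have hpB' := (memReg _ _ _ _ _).mp hpB
      have hpS' := (memS p).mp hpS
      have hpSC : p ∈ RegT (xs, ys, ws, hs) := (memRegT _ _ _ _ _).mpr (by omega)
      obtain ⟨c, hc, hsubc⟩ := hsol.2.2 i
      have hceq : c = (xs, ys, ws, hs) := by
        by_contra hne
        have hdisj := h𝒞disj c hc _ hCstar hne
        have : p ∈ RegT c ∩ RegT (xs, ys, ws, hs) := ⟨hsubc hpB, hpSC⟩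
        rw [hdisj] at this
        exact this
      subst hceq
      have mi1 : (x i, y i) ∈ Reg (x i) (y i) (wB i) (hB i) :=
        (memReg _ _ _ _ _).mpr (by simp; omega)
      have mi2 : (x i + wB i - 1, y i + hB i - 1) ∈ Reg (x i) (y i) (wB i) (hB i) :=
        (memReg _ _ _ _ _).mpr (by simp; omega)
      have ci1 := (memRegT _ _ _ _ _).mp (hsubc mi1)
      have ci2 := (memRegT _ _ _ _ _).mp (hsubc mi2)
      simp only at ci1 ci2
      have hhihs : hB i ∣ hs := by
        rw [hhi, hhs']; exact powDvdOfLe hq2 (by rw [← hhi, ← hhs']; omega)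
      have hhiyi : hB i ∣ y i := (hsol.1 i).2
      have hhiys : hB i ∣ ys := hhihs.trans hhdvd
      by_cases hbi : bi ≤ v
      · have hhiH : hB i ∣ H := by rw [hhi, hHdef]; exact pow_dvd_pow _ hbi
        have hhiy0 : hB i ∣ y 0 := by
          have := dvd_add hhiys (hhiH.trans hHd)
          rwa [show ys + (y 0 - ys) = y 0 by ring] at this
        refine ⟨by omega, by omega, hhiH, ?_⟩
        rcases lt_or_ge p.2 (y 0) with hc' | hc'
        · left
          constructor
          · by_contra hcon
            push_neg at hcon
            have hdvd : hB i ∣ (y 0 - H - y i) := dvd_sub (dvd_sub hhiy0 hhiH) hhiyi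
            rcases dvdLeCases hipos hdvd with h | h <;> omega
          · by_contra hcon
            push_neg at hcon
            have hdvd : hB i ∣ (y i + hB i - y 0) := dvd_sub (dvd_add hhiyi dvd_rfl) hhiy0
            rcases dvdLeCases hipos hdvd with h | h <;> omega
        · right
          constructor
          · by_contra hcon
            push_neg at hcon
            have hdvd : hB i ∣ (y 0 - y i) := dvd_sub hhiy0 hhiyi
            rcases dvdLeCases hipos hdvd with h | h <;> omega
          · by_contra hcon
            push_neg at hcon
            have hdvd : hB i ∣ (y i + hB i - (y 0 + H)) :=
              dvd_sub (dvd_add hhiyi dvd_rfl) (dvd_add hhiy0 hhiH)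
            rcases dvdLeCases hipos hdvd with h | h <;> omega
      · -- tall block: contradiction with B0
        exfalso
        have hHhi : H ∣ hB i := by rw [hhi, hHdef]; exact pow_dvd_pow _ (by omega)
        have hhid : ¬ hB i ∣ (y 0 - ys) := fun hdd =>
          hHsucc ((by rw [hhi]; exact pow_dvd_pow _ (by omega) : (q2:ℤ)^(v+1) ∣ hB i).trans hdd)
        have hHyi : H ∣ y i := hHhi.trans hhiyi
        have hy1 : y i ≤ y 0 := by
          by_contra hcon
          push_neg at hcon
          have hdvd : H ∣ (y i - y 0) := dvd_sub hHyi hHy0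
          rcases dvdLeCases hHpos hdvd with h | h <;> omega
        have hy2 : y 0 + hB 0 ≤ y i + hB i := by
          have hu : H ∣ (y i + hB i - y 0) := dvd_sub (dvd_add hHyi hHhi) hHy0
          rcases dvdLeCases hHpos hu with h | h
          · rcases lt_or_eq_of_le (by omega : y i + hB i ≤ y 0) with hlt | heq
            · have hdvd : H ∣ (y 0 - (y i + hB i)) := dvd_sub hHy0 (dvd_add hHyi hHhi)
              rcases dvdLeCases hHpos hdvd with h2 | h2 <;> omega
            · exfalso
              apply hhid
              have hiy0 : hB i ∣ y 0 := heq ▸ (dvd_add hhiyi dvd_rfl)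
              exact dvd_sub hiy0 hhiys
          · omega
        have hover := hsol.2.1 i 0 hi0
        have hmem : (x i, y 0) ∈ Reg (x i) (y i) (wB i) (hB i) ∩
            Reg (x 0) (y 0) (wB 0) (hB 0) := by
          constructor <;> rw [memReg] <;> simp <;> omega
        rw [hover] at hmem
        exact hmem
    -- the new y-coordinates
    set y' : Fin (m + 1) → ℤ := fun i =>
      if xs ≤ x i ∧ x i < xs + ws ∧ y 0 - H ≤ y i ∧ y i < y 0 then y i + H
      else if xs ≤ x i ∧ x i < xs + ws ∧ y 0 ≤ y i ∧ y i < y 0 + H then y i - H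
      else y i with hy'
    have tri : ∀ i,
        (xs ≤ x i ∧ x i + wB i ≤ xs + ws ∧ y 0 - H ≤ y i ∧ y i + hB i ≤ y 0 ∧
          hB i ∣ H ∧ y' i = y i + H) ∨
        (xs ≤ x i ∧ x i + wB i ≤ xs + ws ∧ y 0 ≤ y i ∧ y i + hB i ≤ y 0 + H ∧
          hB i ∣ H ∧ y' i = y i - H) ∨
        (Reg (x i) (y i) (wB i) (hB i) ∩ Strip = ∅ ∧ y' i = y i) := by
      intro i
      obtain ⟨ai, bi, hwi, hhi⟩ := hBreg i
      have wipos : 0 < wB i := hwi ▸ pow_pos hq1z ai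
      have hipos : 0 < hB i := hhi ▸ pow_pos hq2z bi
      by_cases h1 : xs ≤ x i ∧ x i < xs + ws ∧ y 0 - H ≤ y i ∧ y i < y 0
      · left
        have hy'i : y' i = y i + H := by simp only [hy']; rw [if_pos h1]
        have hne : (Reg (x i) (y i) (wB i) (hB i) ∩ Strip).Nonempty :=
          ⟨(x i, y i), (memReg _ _ _ _ _).mpr (by simp; omega), (memS _).mpr (by simp; omega)⟩
        obtain ⟨k1, k2, k3, k4⟩ := key i hne
        rcases k4 with k | k
        · exact ⟨k1, k2, k.1, k.2, k3, hy'i⟩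
        · exfalso; omega
      · by_cases h2 : xs ≤ x i ∧ x i < xs + ws ∧ y 0 ≤ y i ∧ y i < y 0 + H
        · right; left
          have hy'i : y' i = y i - H := by simp only [hy']; rw [if_neg h1, if_pos h2]
          have hne : (Reg (x i) (y i) (wB i) (hB i) ∩ Strip).Nonempty :=
            ⟨(x i, y i), (memReg _ _ _ _ _).mpr (by simp; omega), (memS _).mpr (by simp; omega)⟩
          obtain ⟨k1, k2, k3, k4⟩ := key i hne
          rcases k4 with k | k
          · exfalso; omega
          · exact ⟨k1, k2, k.1, k.2, k3, hy'i⟩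
        · right; right
          have hy'i : y' i = y i := by simp only [hy']; rw [if_neg h1, if_neg h2]
          refine ⟨?_, hy'i⟩
          by_contra hne
          have hne' : (Reg (x i) (y i) (wB i) (hB i) ∩ Strip).Nonempty :=
            Set.nonempty_iff_ne_empty.mpr hne
          obtain ⟨k1, k2, k3, k4⟩ := key i hne'
          rcases k4 with k | k
          · exact h1 ⟨k1, by omega, k.1, by omega⟩
          · exact h2 ⟨k1, by omega, k.1, by omega⟩
    -- the swap map
    set φ : ℤ × ℤ → ℤ × ℤ := fun p =>
      if xs ≤ p.1 ∧ p.1 < xs + ws ∧ y 0 - H ≤ p.2 ∧ p.2 < y 0 then (p.1, p.2 + H)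
      else if xs ≤ p.1 ∧ p.1 < xs + ws ∧ y 0 ≤ p.2 ∧ p.2 < y 0 + H then (p.1, p.2 - H)
      else p with hφ
    have φval1 : ∀ p : ℤ × ℤ, (xs ≤ p.1 ∧ p.1 < xs + ws ∧ y 0 - H ≤ p.2 ∧ p.2 < y 0) →
        φ p = (p.1, p.2 + H) := by
      intro p h; simp only [hφ]; rw [if_pos h]
    have φval2 : ∀ p : ℤ × ℤ, (xs ≤ p.1 ∧ p.1 < xs + ws ∧ y 0 ≤ p.2 ∧ p.2 < y 0 + H) →
        φ p = (p.1, p.2 - H) := by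
      intro p h; simp only [hφ]; rw [if_neg (by omega), if_pos h]
    have φval3 : ∀ p : ℤ × ℤ, p ∉ Strip → φ p = p := by
      intro p h
      have h' : ¬ (xs ≤ p.1 ∧ p.1 < xs + ws ∧ y 0 - H ≤ p.2 ∧ p.2 < y 0 + H) :=
        fun hc => h ((memS p).mpr hc)
      simp only [hφ]; rw [if_neg (by omega), if_neg (by omega)]
    have φinv : Function.Involutive φ := by
      intro p
      by_cases h1 : xs ≤ p.1 ∧ p.1 < xs + ws ∧ y 0 - H ≤ p.2 ∧ p.2 < y 0
      · rw [φval1 p h1, φval2 (p.1, p.2 + H) (by simp; omega)]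
        simp
      · by_cases h2 : xs ≤ p.1 ∧ p.1 < xs + ws ∧ y 0 ≤ p.2 ∧ p.2 < y 0 + H
        · rw [φval2 p h2, φval1 (p.1, p.2 - H) (by simp; omega)]
          simp
        · have hp : p ∉ Strip := fun hc => by
            have := (memS p).mp hc; omega
          rw [φval3 p hp, φval3 p hp]
    have φinj : Function.Injective φ := φinv.injective
    -- images of the blocks
    have himg : ∀ i, φ '' Reg (x i) (y i) (wB i) (hB i) =
        Reg (x i) (y' i) (wB i) (hB i) := by
      intro i
      rcases tri i with ⟨t1, t2, t3, t4, t5, t6⟩ | ⟨t1, t2, t3, t4, t5, t6⟩ | ⟨t1, t2⟩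
      · rw [t6, ← regTranslate (x i) (y i) (wB i) (hB i) H]
        apply Set.image_congr
        intro p hp
        have hp' := (memReg _ _ _ _ _).mp hp
        rw [φval1 p (by omega)]
      · rw [t6, show y i - H = y i + (-H) by ring,
          ← regTranslate (x i) (y i) (wB i) (hB i) (-H)]
        apply Set.image_congr
        intro p hp
        have hp' := (memReg _ _ _ _ _).mp hp
        rw [φval2 p (by omega)]
        simp only [Prod.mk.injEq]
        exact ⟨trivial, by ring⟩
      · rw [t2]
        have hid : ∀ p ∈ Reg (x i) (y i) (wB i) (hB i), φ p = p := by
          intro p hp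
          exact φval3 p (fun hS => Set.eq_empty_iff_forall_notMem.mp t1 p ⟨hp, hS⟩)
        ext q
        simp only [Set.mem_image]
        constructor
        · rintro ⟨p, hp, rfl⟩
          rw [hid p hp]; exact hp
        · intro hq; exact ⟨q, hq, hid q hq⟩
    -- the new solution
    have newsol : IsSolution (m + 1) wB hB 𝒞 x y' := by
      refine ⟨fun i => ⟨(hsol.1 i).1, ?_⟩, fun i j hij => ?_, fun i => ?_⟩
      · rcases tri i with ⟨_, _, _, _, t5, t6⟩ | ⟨_, _, _, _, t5, t6⟩ | ⟨_, t2⟩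
        · rw [t6]; exact dvd_add (hsol.1 i).2 t5
        · rw [t6]; exact dvd_sub (hsol.1 i).2 t5
        · rw [t2]; exact (hsol.1 i).2
      · rw [← himg i, ← himg j, ← Set.image_inter φinj, hsol.2.1 i j hij, Set.image_empty]
      · rcases tri i with ⟨t1, t2, t3, t4, t5, t6⟩ | ⟨t1, t2, t3, t4, t5, t6⟩ | ⟨t1, t2⟩
        · refine ⟨(xs, ys, ws, hs), hCstar, ?_⟩
          intro p hp
          rw [memReg, t6] at hp
          rw [memRegT]
          omega
        · refine ⟨(xs, ys, ws, hs), hCstar, ?_⟩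
          intro p hp
          rw [memReg, t6] at hp
          rw [memRegT]
          omega
        · obtain ⟨c, hc, hsub⟩ := hsol.2.2 i
          exact ⟨c, hc, by rw [show Reg (x i) (y' i) (wB i) (hB i) =
            Reg (x i) (y i) (wB i) (hB i) by rw [t2]]; exact hsub⟩
    -- block 0 moves down by H
    have h0B : y' 0 = y 0 - H ∧ xs ≤ x 0 ∧ x 0 + wB 0 ≤ xs + ws ∧ y 0 + hB 0 ≤ y 0 + H := by
      rcases tri 0 with ⟨t1, t2, t3, t4, t5, t6⟩ | ⟨t1, t2, t3, t4, t5, t6⟩ | ⟨t1, t2⟩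
      · exfalso; omega
      · exact ⟨t6, t1, t2, t4⟩
      · exfalso
        have : (x 0, y 0) ∈ Reg (x 0) (y 0) (wB 0) (hB 0) ∩ Strip :=
          ⟨m1, (memS _).mpr (by simp; omega)⟩
        rw [t1] at this
        exact this
    obtain ⟨hy'0, hb1, hb2, hb3⟩ := h0B
    have newhin : Reg (x 0) (y' 0) (wB 0) (hB 0) ⊆ RegT (xs, ys, ws, hs) := by
      intro p hp
      rw [memReg, hy'0] at hp
      rw [memRegT]
      omega
    exact IH (y' 0 - ys).toNat (by omega) x y' newsol newhin rfl
  obtain ⟨hpx, hpy⟩ := hpos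
  rw [← hpx, ← hpy] at hin
  exact main (y 0 - ys).toNat x y hsol hin rfl
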